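/- Let D ≥ 2 and n ≥ 1 be integers, S a subgroup of the n-qudit Pauli group P_n, and C = {ψ ∈ ℂ^{D^n} : sψ = ψ for all s ∈ S} with K = dim C ≥ 1. Then both K and |S| divide D^n. -/

import Mathlib

open Matrix

/-- ω = exp(2πi/D), a primitive D-th root of unity. -/
noncomputable def omegaD (D : ℕ) : ℂ := Complex.exp (2 * Real.pi * Complex.I / D)

/-- The single-qudit Pauli operator Z = Σ_j ω^j |j⟩⟨j| on ℂ^D. -/
noncomputable def Zmat (D : ℕ) : Matrix (ZMod D) (ZMod D) ℂ :=
  Matrix.of fun j k => if k = j then omegaD D ^ j.val else 0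

/-- The single-qudit Pauli operator X = Σ_j |j⟩⟨j+1| on ℂ^D (index arithmetic mod D). -/
noncomputable def Xmat (D : ℕ) : Matrix (ZMod D) (ZMod D) ℂ :=
  Matrix.of fun j k => if k = j + 1 then (1 : ℂ) else 0

/-- The n-fold Kronecker product X^x Z^z = (X^{x_1}Z^{z_1}) ⊗ ⋯ ⊗ (X^{x_n}Z^{z_n}),
written entrywise on the index set (Fin n → ZMod D) ≃ (ZMod D)^n of size D^n. -/
noncomputable def XZ (D n : ℕ) [NeZero D] (x z : Fin n → ZMod D) :
    Matrix (Fin n → ZMod D) (Fin n → ZMod D) ℂ :=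
  Matrix.of fun j k => ∏ i, (Xmat D ^ (x i).val * Zmat D ^ (z i).val) (j i) (k i)

/-- A Pauli product ω^λ X^x Z^z on n qudits. -/
def IsPauli (D n : ℕ) [NeZero D] (M : Matrix (Fin n → ZMod D) (Fin n → ZMod D) ℂ) : Prop :=
  ∃ (lam : ZMod D) (x z : Fin n → ZMod D), M = omegaD D ^ lam.val • XZ D n x z

/-- The common fixed subspace C = {ψ : sψ = ψ for all s ∈ S} of a group S of
(invertible) matrices. -/
noncomputable def fixedSpace (D n : ℕ) [NeZero D]
    (S : Subgroup (Matrix (Fin n → ZMod D) (Fin n → ZMod D) ℂ)ˣ) :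
    Submodule ℂ ((Fin n → ZMod D) → ℂ) where
  carrier := {ψ | ∀ s ∈ S, (s : Matrix (Fin n → ZMod D) (Fin n → ZMod D) ℂ) *ᵥ ψ = ψ}
  add_mem' := by
    intro a b ha hb s hs
    rw [Matrix.mulVec_add, ha s hs, hb s hs]
  zero_mem' := by
    intro s hs
    rw [Matrix.mulVec_zero]
  smul_mem' := by
    intro c a ha s hs
    rw [Matrix.mulVec_smul, ha s hs]

lemma omega_prim (D : ℕ) [NeZero D] : IsPrimitiveRoot (omegaD D) D :=
  Complex.isPrimitiveRoot_exp D (NeZero.ne D)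

lemma Xpow (D : ℕ) [NeZero D] (m : ℕ) :
    Xmat D ^ m = Matrix.of (fun j k => if k = j + (m : ZMod D) then (1 : ℂ) else 0) := by
  induction m with
  | zero =>
    ext j k
    simp [Matrix.one_apply, eq_comm]
  | succ m ih =>
    ext j k
    rw [pow_succ, ih]
    simp only [Matrix.mul_apply, Matrix.of_apply, Xmat, ite_mul, one_mul, zero_mul]
    rw [Finset.sum_ite_eq' Finset.univ (j + (m : ZMod D)) (fun l => if k = l + 1 then (1:ℂ) else 0)]
    simp [add_assoc]

lemma Zpow (D : ℕ) [NeZero D] (m : ℕ) :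
    Zmat D ^ m = Matrix.of (fun j k => if k = j then omegaD D ^ (j.val * m) else 0) := by
  induction m with
  | zero =>
    ext j k
    simp [Matrix.one_apply, eq_comm]
  | succ m ih =>
    ext j k
    rw [pow_succ, ih]
    simp only [Matrix.mul_apply, Matrix.of_apply, Zmat, ite_mul, zero_mul]
    rw [Finset.sum_ite_eq' Finset.univ j
      (fun l => omegaD D ^ (j.val * m) * if k = l then omegaD D ^ l.val else 0)]
    simp [Nat.mul_succ, pow_add, mul_ite]

lemma sum_zmod_pow (D : ℕ) [NeZero D] (f : ℕ → ℂ) :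
    ∑ j : ZMod D, f j.val = ∑ i ∈ Finset.range D, f i := by
  apply Finset.sum_nbij' (f := fun j : ZMod D => f j.val) (g := f)
    (fun j => j.val) (fun i => (i : ZMod D))
  · intro a _; exact Finset.mem_range.mpr a.val_lt
  · intro a _; exact Finset.mem_univ _
  · intro a _; simp [ZMod.natCast_val, ZMod.cast_id]
  · intro a ha; exact ZMod.val_cast_of_lt (Finset.mem_range.mp ha)
  · intro a _; rfl

lemma trace_single (D : ℕ) [NeZero D] (a b : ZMod D) :
    Matrix.trace (Xmat D ^ a.val * Zmat D ^ b.val) =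
      if a = 0 ∧ b = 0 then (D : ℂ) else 0 := by
  rw [Xpow, Zpow]
  have hcast : ((a.val : ℕ) : ZMod D) = a := by simp [ZMod.natCast_val, ZMod.cast_id]
  rw [Matrix.trace]
  simp only [Matrix.diag, Matrix.mul_apply, Matrix.of_apply, ite_mul, one_mul, zero_mul, hcast]
  have hdiag : ∀ j : ZMod D,
      (∑ l : ZMod D, if l = j + a then (if j = l then omegaD D ^ (l.val * b.val) else 0) else 0)
      = if j = j + a then omegaD D ^ ((j + a).val * b.val) else 0 := by
    intro j
    rw [Finset.sum_ite_eq' Finset.univ (j + a)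
      (fun l => if j = l then omegaD D ^ (l.val * b.val) else 0)]
    simp only [Finset.mem_univ, if_true]
  simp only [hdiag]
  by_cases ha : a = 0
  · subst ha
    simp only [add_zero, eq_self_iff_true, if_true, true_and]
    by_cases hb : b = 0
    · subst hb
      simp [ZMod.card]
    · rw [if_neg hb]
      have h1 : ∀ j : ZMod D, omegaD D ^ (j.val * b.val) = (omegaD D ^ b.val) ^ j.val := by
        intro j; rw [← pow_mul, mul_comm]
      simp only [h1]
      rw [sum_zmod_pow D (fun v => (omegaD D ^ b.val) ^ v)]
      have hne : omegaD D ^ b.val ≠ 1 := by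
        refine (omega_prim D).pow_ne_one_of_pos_of_lt ?_ b.val_lt
        exact (fun h => hb ((ZMod.val_eq_zero b).mp h))
      rw [geom_sum_eq hne]
      have : (omegaD D ^ b.val) ^ D = 1 := by
        rw [← pow_mul, mul_comm, pow_mul, (omega_prim D).pow_eq_one, one_pow]
      rw [this]
      simp
  · have hja : ∀ j : ZMod D, ¬ (j = j + a) := by
      intro j h
      exact ha (by simpa using (left_eq_add.mp h))
    simp [hja, ha]

lemma XZ_zero (D n : ℕ) [NeZero D] : XZ D n 0 0 = 1 := by
  ext j k
  simp only [XZ, Matrix.of_apply, Pi.zero_apply, ZMod.val_zero, pow_zero, one_mul,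
    Matrix.one_apply]
  rw [Finset.prod_boole]
  simp [funext_iff]

lemma trace_XZ (D n : ℕ) [NeZero D] (x z : Fin n → ZMod D) :
    Matrix.trace (XZ D n x z) = if x = 0 ∧ z = 0 then ((D : ℂ)) ^ n else 0 := by
  have hfact : Matrix.trace (XZ D n x z)
      = ∏ i, Matrix.trace (Xmat D ^ (x i).val * Zmat D ^ (z i).val) := by
    simp only [Matrix.trace, Matrix.diag, XZ, Matrix.of_apply]
    exact (Fintype.prod_sum fun i a => (Xmat D ^ (x i).val * Zmat D ^ (z i).val) a a).symm
  rw [hfact]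
  simp only [trace_single]
  by_cases h : x = 0 ∧ z = 0
  · obtain ⟨hx, hz⟩ := h
    subst hx; subst hz
    simp
  · rw [if_neg h]
    have hex : ∃ i, ¬(x i = 0 ∧ z i = 0) := by
      by_contra hc
      push_neg at hc
      exact h ⟨funext fun i => (hc i).1, funext fun i => (hc i).2⟩
    obtain ⟨i0, hi0⟩ := hex
    exact Finset.prod_eq_zero (Finset.mem_univ i0) (if_neg hi0)

lemma sum_mulVec' {ι κ : Type*} [Fintype ι] [Fintype κ] (A : κ → Matrix ι ι ℂ) (v : ι → ℂ) :
    (∑ s, A s) *ᵥ v = ∑ s, (A s) *ᵥ v := by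
  ext j
  simp only [Matrix.mulVec, dotProduct, Finset.sum_apply, Matrix.sum_apply,
    Finset.sum_mul]
  rw [Finset.sum_comm]

lemma trace_mulVecLin {ι : Type*} [Fintype ι] [DecidableEq ι] (M : Matrix ι ι ℂ) :
    LinearMap.trace ℂ (ι → ℂ) M.mulVecLin = Matrix.trace M := by
  rw [← Matrix.toLin'_apply', LinearMap.trace_eq_matrix_trace ℂ (Pi.basisFun ℂ ι),
    LinearMap.toMatrix_eq_toMatrix', LinearMap.toMatrix'_toLin']

/-- Both the code dimension K and the stabilizer size |S| divide D^n. -/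
theorem stmt_16 (D n : ℕ) [NeZero D] (hD : 2 ≤ D) (hn : 1 ≤ n)
    (S : Subgroup (Matrix (Fin n → ZMod D) (Fin n → ZMod D) ℂ)ˣ)
    (hS : ∀ s ∈ S, IsPauli D n (s : Matrix (Fin n → ZMod D) (Fin n → ZMod D) ℂ))
    (hK : 1 ≤ Module.finrank ℂ (fixedSpace D n S)) :
    Module.finrank ℂ (fixedSpace D n S) ∣ D ^ n ∧ Nat.card S ∣ D ^ n := by
  classical
  -- S is finite
  have hfin : Finite ↥S := by
    let g : (ZMod D × (Fin n → ZMod D) × (Fin n → ZMod D)) →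
        Matrix (Fin n → ZMod D) (Fin n → ZMod D) ℂ :=
      fun p => omegaD D ^ p.1.val • XZ D n p.2.1 p.2.2
    have hval : ∀ s : ↥S, ((s : (Matrix (Fin n → ZMod D) (Fin n → ZMod D) ℂ)ˣ) :
        Matrix (Fin n → ZMod D) (Fin n → ZMod D) ℂ) ∈ Set.range g := by
      intro s
      obtain ⟨lam, x, z, h⟩ := hS s s.2
      exact ⟨⟨lam, x, z⟩, h.symm⟩
    have : Finite ↥(Set.range g) := (Set.finite_range g).to_subtype
    refine Finite.of_injective (fun s : ↥S => (⟨_, hval s⟩ : ↥(Set.range g))) ?_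
    intro s t h
    have h2 := congrArg Subtype.val h
    exact Subtype.ext (Units.ext h2)
  have := Fintype.ofFinite ↥S
  set Mtx := Matrix (Fin n → ZMod D) (Fin n → ZMod D) ℂ
  -- a nonzero fixed vector
  obtain ⟨ψ, hψS, hψ0⟩ : ∃ ψ ∈ fixedSpace D n S, ψ ≠ 0 := by
    have : fixedSpace D n S ≠ ⊥ := by
      intro hbot
      rw [hbot] at hK
      simp [finrank_bot] at hK
    exact (Submodule.ne_bot_iff _).mp this
  -- nonidentity elements have trace zero
  have htr0 : ∀ s : ↥S, s ≠ 1 → Matrix.trace ((s : Mtxˣ) : Mtx) = 0 := by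
    intro s hs1
    obtain ⟨lam, x, z, h⟩ := hS s s.2
    rw [h, Matrix.trace_smul, trace_XZ]
    by_cases hxz : x = 0 ∧ z = 0
    · obtain ⟨hx, hz⟩ := hxz
      subst hx; subst hz
      exfalso
      by_cases hl : lam = 0
      · apply hs1
        apply Subtype.ext
        apply Units.ext
        rw [h, hl, XZ_zero]
        simp
      · -- nontrivial phase fixes ψ : contradiction
        have hfix := hψS (s : Mtxˣ) s.2
        rw [h, XZ_zero] at hfix
        rw [Matrix.smul_mulVec, Matrix.one_mulVec] at hfix
        have : (omegaD D ^ lam.val - 1) • ψ = 0 := by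
          rw [sub_smul, one_smul, hfix, sub_self]
        rcases smul_eq_zero.mp this with hc | hc
        · have hne : omegaD D ^ lam.val ≠ 1 := by
            refine (omega_prim D).pow_ne_one_of_pos_of_lt ?_ lam.val_lt
            exact (fun hh => hl ((ZMod.val_eq_zero lam).mp hh))
          exact hne (by linear_combination hc)
        · exact hψ0 hc
    · rw [if_neg hxz, smul_zero]
  -- sum of traces over S
  have hcard : (D : ℂ) ^ n = ∑ s : ↥S, Matrix.trace ((s : Mtxˣ) : Mtx) := by
    rw [Fintype.sum_eq_single (1 : ↥S) htr0]
    have : (((1 : ↥S) : Mtxˣ) : Mtx) = 1 := by simp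
    rw [this, Matrix.trace_one]
    simp [Fintype.card_fun, ZMod.card]
  -- the averaging projector
  set c : ℂ := (Fintype.card ↥S : ℂ) with hc
  have hc0 : c ≠ 0 := Nat.cast_ne_zero.mpr Fintype.card_ne_zero
  set P : Mtx := c⁻¹ • ∑ s : ↥S, ((s : Mtxˣ) : Mtx) with hP
  have hmulsum : ∀ t : ↥S, ((t : Mtxˣ) : Mtx) * ∑ s : ↥S, ((s : Mtxˣ) : Mtx)
      = ∑ s : ↥S, ((s : Mtxˣ) : Mtx) := by
    intro t
    rw [Finset.mul_sum]
    exact Fintype.sum_equiv (Equiv.mulLeft t)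
      (fun s => ((t : Mtxˣ) : Mtx) * ((s : Mtxˣ) : Mtx))
      (fun s => ((s : Mtxˣ) : Mtx)) (fun s => rfl)
  have hPmem : ∀ φ, P *ᵥ φ ∈ fixedSpace D n S := by
    intro φ t ht
    show (t : Mtx) *ᵥ (P *ᵥ φ) = P *ᵥ φ
    rw [Matrix.mulVec_mulVec, hP, Matrix.mul_smul,
      hmulsum ⟨t, ht⟩]
  have hPfix : ∀ ψ ∈ fixedSpace D n S, P *ᵥ ψ = ψ := by
    intro ψ hmem
    rw [hP, Matrix.smul_mulVec, sum_mulVec']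
    have : ∀ s : ↥S, ((s : Mtxˣ) : Mtx) *ᵥ ψ = ψ := fun s => hmem (s : Mtxˣ) s.2
    simp only [this]
    rw [Finset.sum_const, Finset.card_univ, ← Nat.cast_smul_eq_nsmul ℂ, smul_smul,
      inv_mul_cancel₀ hc0, one_smul]
  have hproj : LinearMap.IsProj (fixedSpace D n S) P.mulVecLin :=
    ⟨fun φ => hPmem φ, fun ψ h => hPfix ψ h⟩
  have htrP : Matrix.trace P = c⁻¹ * (D : ℂ) ^ n := by
    rw [hP, Matrix.trace_smul, Matrix.trace_sum, ← hcard, smul_eq_mul]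
  have hKtr : (Module.finrank ℂ (fixedSpace D n S) : ℂ) = c⁻¹ * (D : ℂ) ^ n := by
    rw [← htrP, ← trace_mulVecLin, hproj.trace]
  have hKc : ((Module.finrank ℂ (fixedSpace D n S) * Fintype.card ↥S : ℕ) : ℂ)
      = ((D ^ n : ℕ) : ℂ) := by
    push_cast
    rw [hKtr]
    field_simp
    rw [hc]; ring
  have hKnat : Module.finrank ℂ (fixedSpace D n S) * Fintype.card ↥S = D ^ n :=
    Nat.cast_injective hKc
  constructor
  · exact Dvd.intro _ hKnat
  · rw [Nat.card_eq_fintype_card]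
    exact Dvd.intro_left _ hKnat
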